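/- If τc i j > 0 for all i, j and s is a critical point of the marginal-utility loss L (i.e., every partial derivative of L with respect to a coordinate s i j vanishes at s), then for all i, j one has σ(s i j) = τr i j / (2·τc i j); that is, q i j equals half the marginal utility ℓ i j = τr i j / τc i j. -/

import Mathlib

/-- The sigmoid function. -/
noncomputable def sigm (t : ℝ) : ℝ := 1 / (1 + Real.exp (-t))

lemma sigm_hasDerivAt (t : ℝ) :
    HasDerivAt sigm (Real.exp (-t) / (1 + Real.exp (-t)) ^ 2) t := by
  have hpos : 0 < 1 + Real.exp (-t) := by positivity
  have h1 : HasDerivAt (fun t : ℝ => 1 + Real.exp (-t)) (-Real.exp (-t)) t := by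
    have := (Real.hasDerivAt_exp (-t)).comp t (hasDerivAt_neg t)
    simpa using (this.const_add 1)
  have := (hasDerivAt_const t (1:ℝ)).fun_div h1 (ne_of_gt hpos)
  refine this.congr_deriv ?_
  field_simp
  ring

theorem marginal_utility_critical_point
    (M K : ℕ) (hM : 0 < M) (hK : 0 < K)
    (s τr τc : Fin M → Fin K → ℝ)
    (L : (Fin M → Fin K → ℝ) → ℝ)
    (hL : L = fun u : Fin M → Fin K → ℝ => -(1 / (M : ℝ)) *
      ∑ i, ∑ j, (sigm (u i j) * τr i j - (sigm (u i j)) ^ 2 * τc i j))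
    (hτc : ∀ i j, 0 < τc i j)
    (hcrit : ∀ (i : Fin M) (j : Fin K),
      HasDerivAt
        (fun t : ℝ => L (Function.update s i (Function.update (s i) j t)))
        0 (s i j)) :
    ∀ (i : Fin M) (j : Fin K), sigm (s i j) = τr i j / (2 * τc i j) := by
  intro i j
  set e := Real.exp (-(s i j)) with he
  have hepos : 0 < e := Real.exp_pos _
  set c : ℝ := e / (1 + e) ^ 2 * (τr i j - 2 * sigm (s i j) * τc i j) with hc
  set d : Fin M → Fin K → ℝ :=
    fun i' j' => if i' = i then (if j' = j then c else 0) else 0 with hd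
  -- per-term derivative
  have hterm : ∀ (i' : Fin M) (j' : Fin K),
      HasDerivAt (fun t : ℝ =>
        sigm ((Function.update s i (Function.update (s i) j t)) i' j') * τr i' j'
          - (sigm ((Function.update s i (Function.update (s i) j t)) i' j')) ^ 2 * τc i' j')
        (d i' j') (s i j) := by
    intro i' j'
    by_cases hi : i' = i
    · subst hi
      simp only [Function.update_self]
      by_cases hj : j' = j
      · subst hj
        simp only [Function.update_self, hd, if_pos rfl]
        have hσ := sigm_hasDerivAt (s i' j')
        have := ((hσ.mul_const (τr i' j')).fun_sub (((hσ.fun_pow 2)).mul_const (τc i' j')))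
        refine this.congr_deriv ?_
        simp [hc, he]
        ring
      · simp only [Function.update_of_ne hj, hd, if_pos rfl, if_neg hj]
        exact hasDerivAt_const _ _
    · simp only [Function.update_of_ne hi, hd, if_neg hi]
      exact hasDerivAt_const _ _
  have hsum : HasDerivAt
      (fun t : ℝ => L (Function.update s i (Function.update (s i) j t)))
      (-(1 / (M : ℝ)) * c) (s i j) := by
    rw [hL]
    have h1 : HasDerivAt (fun t : ℝ =>
        ∑ i', ∑ j',
          (sigm ((Function.update s i (Function.update (s i) j t)) i' j') * τr i' j'
            - (sigm ((Function.update s i (Function.update (s i) j t)) i' j')) ^ 2 * τc i' j'))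
        (∑ i', ∑ j', d i' j') (s i j) := by
      apply HasDerivAt.fun_sum
      intro i' _
      apply HasDerivAt.fun_sum
      intro j' _
      exact hterm i' j'
    have hsum_eq : (∑ i', ∑ j', d i' j') = c := by
      simp [hd, Finset.sum_ite_eq']
    rw [hsum_eq] at h1
    exact h1.const_mul _
  have h0 : -(1 / (M : ℝ)) * c = 0 := hsum.unique (hcrit i j)
  have hMne : (1 / (M : ℝ)) ≠ 0 := by
    exact one_div_ne_zero (Nat.cast_ne_zero.mpr hM.ne')
  have hcz : c = 0 := by
    rcases mul_eq_zero.mp h0 with h | h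
    · exact absurd (neg_eq_zero.mp h) hMne
    · exact h
  have hfac : e / (1 + e) ^ 2 ≠ 0 := by positivity
  have : τr i j - 2 * sigm (s i j) * τc i j = 0 := by
    rcases mul_eq_zero.mp hcz with h | h
    · exact absurd h hfac
    · exact h
  have hτ := hτc i j
  field_simp
  linarith
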